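/- The par of player games preserves counter-strategy existence: for player games P and P', the game P ⅋ P' has a counter-strategy if and only if both P and P' have counter-strategies. Equivalently, P ⅋ P' has a strategy iff P has a strategy or P' has a strategy. -/
import Mathlib


/-- Rose trees: the unlabeled shape of a game tree. -/
inductive RTree : Type where
  | node : List RTree → RTree

mutual
/-- An opponent game: a finite list of player games (its children). -/
inductive OGame : Type where
  | mk : List PGame → OGame
/-- A player game: a finite list of opponent games (its children). -/
inductive PGame : Type where
  | mk : List OGame → PGame
end

mutual
/-- The dual of an opponent game. -/
def OGame.dual : OGame → PGame
  | .mk ps => .mk (ps.attach.map fun ⟨p, _⟩ => p.dual)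
/-- The dual of a player game. -/
def PGame.dual : PGame → OGame
  | .mk os => .mk (os.attach.map fun ⟨o, _⟩ => o.dual)
end

mutual
/-- Strategy existence in an opponent game: a conjunction over children. -/
def OGame.strat : OGame → Bool
  | .mk ps => ps.attach.all fun ⟨p, _⟩ => p.strat
/-- Strategy existence in a player game: a disjunction over children. -/
def PGame.strat : PGame → Bool
  | .mk os => os.attach.any fun ⟨o, _⟩ => o.strat
end

mutual
/-- Tensor of opponent games: `O ⊗ O' = (P_i ⊗ˡ O', O ⊗ʳ P'_k | …)`. -/
def otimes : OGame → OGame → OGame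
  | .mk ps, .mk qs => .mk ((ps.attach.map fun ⟨p, _⟩ => oxl p (.mk qs)) ++
      (qs.attach.map fun ⟨q, _⟩ => oxr (.mk ps) q))
  termination_by o o' => sizeOf o + sizeOf o'
  decreasing_by
  · have := List.sizeOf_lt_of_mem ‹p ∈ ps›; simp_all; omega
  · have := List.sizeOf_lt_of_mem ‹q ∈ qs›; simp_all; omega
/-- Mixed tensor `O ⊗ʳ P = {O ⊗ O_j | j ∈ J}`. -/
def oxr : OGame → PGame → PGame
  | o, .mk os => .mk (os.attach.map fun ⟨oj, _⟩ => otimes o oj)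
  termination_by o p => sizeOf o + sizeOf p
  decreasing_by
  · have := List.sizeOf_lt_of_mem ‹oj ∈ os›; simp_all; omega
/-- Mixed tensor `P ⊗ˡ O = {O_j ⊗ O | j ∈ J}`. -/
def oxl : PGame → OGame → PGame
  | .mk os, o => .mk (os.attach.map fun ⟨oj, _⟩ => otimes oj o)
  termination_by p o => sizeOf p + sizeOf o
  decreasing_by
  · have := List.sizeOf_lt_of_mem ‹oj ∈ os›; simp_all; omega
end

mutual
/-- Par of player games: `P ⅋ P' = {O_j ⅋ˡ P', P ⅋ʳ O'_k | …}`. -/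
def parr : PGame → PGame → PGame
  | .mk os, .mk qs => .mk ((os.attach.map fun ⟨o, _⟩ => parrOP o (.mk qs)) ++
      (qs.attach.map fun ⟨q, _⟩ => parrPO (.mk os) q))
  termination_by p p' => sizeOf p + sizeOf p'
  decreasing_by
  · have := List.sizeOf_lt_of_mem ‹o ∈ os›; simp_all; omega
  · have := List.sizeOf_lt_of_mem ‹q ∈ qs›; simp_all; omega
/-- Mixed par `P ⅋ʳ O = (P ⅋ P_i | i ∈ I)`. -/
def parrPO : PGame → OGame → OGame
  | p, .mk ps => .mk (ps.attach.map fun ⟨pi, _⟩ => parr p pi)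
  termination_by p o => sizeOf p + sizeOf o
  decreasing_by
  · have := List.sizeOf_lt_of_mem ‹pi ∈ ps›; simp_all; omega
/-- Mixed par `O ⅋ˡ P = (P_i ⅋ P | i ∈ I)`. -/
def parrOP : OGame → PGame → OGame
  | .mk ps, p => .mk (ps.attach.map fun ⟨pi, _⟩ => parr pi p)
  termination_by o p => sizeOf o + sizeOf p
  decreasing_by
  · have := List.sizeOf_lt_of_mem ‹pi ∈ ps›; simp_all; omega
end

mutual
/-- The exponential `!O`: `!() = ()` and `!O = ⊗_{i∈I} (b_i : !'P_i)` for `I ≠ ∅`. -/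
def bang : OGame → OGame
  | .mk [] => .mk []
  | .mk (p :: ps) =>
      (ps.attach.map fun ⟨q, _⟩ => OGame.mk [bang' q]).foldl otimes (OGame.mk [bang' p])
/-- The auxiliary exponential `!'{a_j : O_j} = {a_j : !O_j}`. -/
def bang' : PGame → PGame
  | .mk os => .mk (os.attach.map fun ⟨o, _⟩ => bang o)
end

mutual
/-- Underlying unlabeled tree of an opponent game. -/
def OGame.toTree : OGame → RTree
  | .mk ps => .node (ps.attach.map fun ⟨p, _⟩ => p.toTree)
/-- Underlying unlabeled tree of a player game. -/
def PGame.toTree : PGame → RTree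
  | .mk os => .node (os.attach.map fun ⟨o, _⟩ => o.toTree)
end

/-- Number of nodes (including the root). -/
def RTree.nodes : RTree → ℕ
  | .node cs => 1 + (cs.attach.map fun ⟨c, _⟩ => c.nodes).sum

/-- Number of parent-child edges. -/
def RTree.edges : RTree → ℕ
  | .node cs => cs.length + (cs.attach.map fun ⟨c, _⟩ => c.edges).sum

/-- Number of leaves. -/
def RTree.leaves : RTree → ℕ
  | .node [] => 1
  | .node cs => (cs.attach.map fun ⟨c, _⟩ => c.leaves).sum

/-- Uniform size: `u[leaf] = 0`, `u[node with n children] = (n-1) + Σ u[child]`. -/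
def RTree.usize : RTree → ℕ
  | .node [] => 0
  | .node cs => (cs.length - 1) + (cs.attach.map fun ⟨c, _⟩ => c.usize).sum

/-- Depth: leaves have depth 0. -/
def RTree.depth : RTree → ℕ
  | .node cs => (cs.attach.map fun ⟨c, _⟩ => c.depth + 1).foldr max 0

/-- `profile t k` is the number of nodes of `t` at depth `k`. -/
def RTree.profile : RTree → ℕ → ℕ
  | _, 0 => 1
  | .node cs, k + 1 => (cs.attach.map fun ⟨c, _⟩ => c.profile k).sum

mutual
/-- Number of player nodes of an opponent game. -/
def OGame.pnodes : OGame → ℕ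
  | .mk ps => (ps.attach.map fun ⟨p, _⟩ => p.pnodes).sum
/-- Number of player nodes of a player game (the root counts). -/
def PGame.pnodes : PGame → ℕ
  | .mk os => 1 + (os.attach.map fun ⟨o, _⟩ => o.pnodes).sum
end

mutual
/-- Number of edges leaving opponent nodes, for an opponent game. -/
def OGame.eo : OGame → ℕ
  | .mk ps => ps.length + (ps.attach.map fun ⟨p, _⟩ => p.eo).sum
/-- Number of edges leaving opponent nodes, for a player game. -/
def PGame.eo : PGame → ℕ
  | .mk os => (os.attach.map fun ⟨o, _⟩ => o.eo).sum
end

mutual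
/-- Number of edges leaving player nodes, for an opponent game. -/
def OGame.ep : OGame → ℕ
  | .mk ps => (ps.attach.map fun ⟨p, _⟩ => p.ep).sum
/-- Number of edges leaving player nodes, for a player game. -/
def PGame.ep : PGame → ℕ
  | .mk os => os.length + (os.attach.map fun ⟨o, _⟩ => o.ep).sum
end

/-- `γ(i,j) = 1` if `i` or `j` is zero or even, else `0`. -/
def gammaCoef (i j : ℕ) : ℕ :=
  if i = 0 ∨ j = 0 ∨ i % 2 = 0 ∨ j % 2 = 0 then 1 else 0

mutual
/-- The single-branch player chain `L_n`. -/
def Lp : ℕ → PGame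
  | 0 => .mk []
  | n + 1 => .mk [Lo n]
/-- The single-branch opponent chain `L'_n`. -/
def Lo : ℕ → OGame
  | 0 => .mk []
  | n + 1 => .mk [Lp n]
end

lemma OGame_strat_iff (ps : List PGame) :
    (OGame.mk ps).strat = true ↔ ∀ p ∈ ps, p.strat = true := by
  rw [OGame.strat]; simp [List.all_eq_true]

lemma PGame_strat_iff (os : List OGame) :
    (PGame.mk os).strat = true ↔ ∃ o ∈ os, o.strat = true := by
  rw [PGame.strat]; simp [List.any_eq_true]

lemma OGame_dual_strat_iff (ps : List PGame) :
    (OGame.mk ps).dual.strat = true ↔ ∃ p ∈ ps, p.dual.strat = true := by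
  rw [OGame.dual, PGame.strat]; simp [List.any_eq_true]

lemma PGame_dual_strat_iff (os : List OGame) :
    (PGame.mk os).dual.strat = true ↔ ∀ o ∈ os, o.dual.strat = true := by
  rw [PGame.dual, OGame.strat]; simp [List.all_eq_true]

mutual
theorem parr_strats (p p' : PGame) :
    ((parr p p').strat = true ↔ (p.strat = true ∨ p'.strat = true)) ∧
    ((parr p p').dual.strat = true ↔ (p.dual.strat = true ∧ p'.dual.strat = true)) := by
  obtain ⟨os⟩ := p; obtain ⟨qs⟩ := p'
  have IH1 : ∀ o ∈ os,
      ((parrOP o (.mk qs)).strat = true ↔ (o.strat = true ∨ (PGame.mk qs).strat = true)) ∧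
      ((parrOP o (.mk qs)).dual.strat = true ↔
        (o.dual.strat = true ∧ (PGame.mk qs).dual.strat = true)) :=
    fun o hm => parrOP_strats o (.mk qs)
  have IH2 : ∀ q ∈ qs,
      ((parrPO (.mk os) q).strat = true ↔ ((PGame.mk os).strat = true ∨ q.strat = true)) ∧
      ((parrPO (.mk os) q).dual.strat = true ↔
        ((PGame.mk os).dual.strat = true ∧ q.dual.strat = true)) :=
    fun q hm => parrPO_strats (.mk os) q
  simp only [parr]
  constructor
  · rw [PGame_strat_iff]
    simp only [List.mem_append, List.mem_map, List.mem_attach, true_and, Subtype.exists,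
      exists_prop]
    constructor
    · rintro ⟨x, (⟨o, ho, rfl⟩ | ⟨q, hq, rfl⟩), hx⟩
      · rcases (IH1 o ho).1.mp hx with h | h
        · exact Or.inl ((PGame_strat_iff os).mpr ⟨o, ho, h⟩)
        · exact Or.inr h
      · rcases (IH2 q hq).1.mp hx with h | h
        · exact Or.inl h
        · exact Or.inr ((PGame_strat_iff qs).mpr ⟨q, hq, h⟩)
    · rintro (h | h)
      · obtain ⟨o, ho, hs⟩ := (PGame_strat_iff os).mp h
        exact ⟨_, Or.inl ⟨o, ho, rfl⟩, (IH1 o ho).1.mpr (Or.inl hs)⟩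
      · obtain ⟨q, hq, hs⟩ := (PGame_strat_iff qs).mp h
        exact ⟨_, Or.inr ⟨q, hq, rfl⟩, (IH2 q hq).1.mpr (Or.inr hs)⟩
  · rw [PGame_dual_strat_iff]
    simp only [List.mem_append, List.mem_map, List.mem_attach, true_and, Subtype.exists,
      exists_prop]
    constructor
    · intro h
      constructor
      · rw [PGame_dual_strat_iff]
        intro o ho
        exact ((IH1 o ho).2.mp (h _ (Or.inl ⟨o, ho, rfl⟩))).1
      · rw [PGame_dual_strat_iff]
        intro q hq
        exact ((IH2 q hq).2.mp (h _ (Or.inr ⟨q, hq, rfl⟩))).2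
    · rintro ⟨hA, hB⟩ x (⟨o, ho, rfl⟩ | ⟨q, hq, rfl⟩)
      · exact (IH1 o ho).2.mpr ⟨(PGame_dual_strat_iff os).mp hA o ho, hB⟩
      · exact (IH2 q hq).2.mpr ⟨hA, (PGame_dual_strat_iff qs).mp hB q hq⟩
  termination_by sizeOf p + sizeOf p'
  decreasing_by
  all_goals (have := List.sizeOf_lt_of_mem hm; simp_all; omega)

theorem parrOP_strats (o : OGame) (p : PGame) :
    ((parrOP o p).strat = true ↔ (o.strat = true ∨ p.strat = true)) ∧
    ((parrOP o p).dual.strat = true ↔ (o.dual.strat = true ∧ p.dual.strat = true)) := by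
  obtain ⟨ps⟩ := o
  have IH : ∀ pi ∈ ps,
      ((parr pi p).strat = true ↔ (pi.strat = true ∨ p.strat = true)) ∧
      ((parr pi p).dual.strat = true ↔ (pi.dual.strat = true ∧ p.dual.strat = true)) :=
    fun pi hm => parr_strats pi p
  simp only [parrOP]
  constructor
  · rw [OGame_strat_iff, OGame_strat_iff]
    simp only [List.mem_map, List.mem_attach, true_and, Subtype.exists, exists_prop,
      forall_exists_index]
    constructor
    · intro h
      by_cases hp : p.strat = true
      · exact Or.inr hp
      · refine Or.inl fun pi hm => ?_
        rcases (IH pi hm).1.mp (h _ pi ⟨hm, rfl⟩) with h' | h'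
        · exact h'
        · exact absurd h' hp
    · rintro (h | h) x pi ⟨hm, rfl⟩
      · exact (IH pi hm).1.mpr (Or.inl (h pi hm))
      · exact (IH pi hm).1.mpr (Or.inr h)
  · rw [OGame_dual_strat_iff, OGame_dual_strat_iff]
    simp only [List.mem_map, List.mem_attach, true_and, Subtype.exists, exists_prop]
    constructor
    · rintro ⟨x, ⟨pi, hm, rfl⟩, hx⟩
      obtain ⟨h1, h2⟩ := (IH pi hm).2.mp hx
      exact ⟨⟨pi, hm, h1⟩, h2⟩
    · rintro ⟨⟨pi, hm, h1⟩, h2⟩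
      exact ⟨_, ⟨pi, hm, rfl⟩, (IH pi hm).2.mpr ⟨h1, h2⟩⟩
  termination_by sizeOf o + sizeOf p
  decreasing_by
  all_goals (have := List.sizeOf_lt_of_mem hm; simp_all; omega)

theorem parrPO_strats (p : PGame) (o : OGame) :
    ((parrPO p o).strat = true ↔ (p.strat = true ∨ o.strat = true)) ∧
    ((parrPO p o).dual.strat = true ↔ (p.dual.strat = true ∧ o.dual.strat = true)) := by
  obtain ⟨ps⟩ := o
  have IH : ∀ pi ∈ ps,
      ((parr p pi).strat = true ↔ (p.strat = true ∨ pi.strat = true)) ∧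
      ((parr p pi).dual.strat = true ↔ (p.dual.strat = true ∧ pi.dual.strat = true)) :=
    fun pi hm => parr_strats p pi
  simp only [parrPO]
  constructor
  · rw [OGame_strat_iff, OGame_strat_iff]
    simp only [List.mem_map, List.mem_attach, true_and, Subtype.exists, exists_prop,
      forall_exists_index]
    constructor
    · intro h
      by_cases hp : p.strat = true
      · exact Or.inl hp
      · refine Or.inr fun pi hm => ?_
        rcases (IH pi hm).1.mp (h _ pi ⟨hm, rfl⟩) with h' | h'
        · exact absurd h' hp
        · exact h'
    · rintro (h | h) x pi ⟨hm, rfl⟩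
      · exact (IH pi hm).1.mpr (Or.inl h)
      · exact (IH pi hm).1.mpr (Or.inr (h pi hm))
  · rw [OGame_dual_strat_iff, OGame_dual_strat_iff]
    simp only [List.mem_map, List.mem_attach, true_and, Subtype.exists, exists_prop]
    constructor
    · rintro ⟨x, ⟨pi, hm, rfl⟩, hx⟩
      obtain ⟨h1, h2⟩ := (IH pi hm).2.mp hx
      exact ⟨h1, pi, hm, h2⟩
    · rintro ⟨h1, pi, hm, h2⟩
      exact ⟨_, ⟨pi, hm, rfl⟩, (IH pi hm).2.mpr ⟨h1, h2⟩⟩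
  termination_by sizeOf p + sizeOf o
  decreasing_by
  all_goals (have := List.sizeOf_lt_of_mem hm; simp_all; omega)
end

/-- P ⅋ P' has a counter-strategy iff both P and P' do;
equivalently, P ⅋ P' has a strategy iff P or P' has one. -/
theorem parr_counterstrat (P P' : PGame) :
    ((parr P P').dual.strat = true ↔ (P.dual.strat = true ∧ P'.dual.strat = true)) ∧
    ((parr P P').strat = true ↔ (P.strat = true ∨ P'.strat = true)) := by
  exact ⟨(parr_strats P P').2, (parr_strats P P').1⟩
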